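/- Let λ, μ ∈ ℝ satisfy cos(λπ) < cos(μπ). Then the function k ↦ Θ(λK(k), k)/Θ(μK(k), k) is positive and strictly monotone increasing on the interval k ∈ (0,1). -/

import Mathlib

open Real

/-- Complete elliptic integral of the first kind. -/
noncomputable def EllK (k : ℝ) : ℝ :=
  ∫ θ in (0:ℝ)..(π/2), 1 / Real.sqrt (1 - k^2 * Real.sin θ ^ 2)

/-- Complete elliptic integral of the second kind. -/
noncomputable def EllE (k : ℝ) : ℝ :=
  ∫ θ in (0:ℝ)..(π/2), Real.sqrt (1 - k^2 * Real.sin θ ^ 2)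

/-- Complementary complete elliptic integral `K'(k) = K(√(1-k²))`. -/
noncomputable def EllK' (k : ℝ) : ℝ := EllK (Real.sqrt (1 - k^2))

/-- Complementary elliptic integral of the second kind `E'(k) = E(√(1-k²))`. -/
noncomputable def EllE' (k : ℝ) : ℝ := EllE (Real.sqrt (1 - k^2))

/-- The nome `q = exp(-π K'(k)/K(k))`. -/
noncomputable def nome (k : ℝ) : ℝ := Real.exp (-π * EllK' k / EllK k)

/-- Jacobi's theta function `Θ(u,k) = 1 + 2 ∑_{n≥1} (-1)^n q^{n²} cos(nπu/K)`. -/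
noncomputable def JTheta (u k : ℝ) : ℝ :=
  1 + 2 * ∑' n : ℕ, (-1 : ℝ)^(n+1) * nome k ^ ((n+1)^2) *
    Real.cos (((n:ℝ)+1) * π * u / EllK k)

/-- Jacobi's theta function `H(u,k) = 2 ∑_{n≥0} (-1)^n q^{(n+1/2)²} sin((2n+1)πu/(2K))`. -/
noncomputable def JH (u k : ℝ) : ℝ :=
  2 * ∑' n : ℕ, (-1 : ℝ)^n * nome k ^ ((((n:ℝ) + 1/2)^2)) *
    Real.sin ((2*(n:ℝ)+1) * π * u / (2 * EllK k))

/-- Jacobi's theta function `H₁(u,k) = 2 ∑_{n≥0} q^{(n+1/2)²} cos((2n+1)πu/(2K))`. -/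
noncomputable def JH1 (u k : ℝ) : ℝ :=
  2 * ∑' n : ℕ, nome k ^ ((((n:ℝ) + 1/2)^2)) *
    Real.cos ((2*(n:ℝ)+1) * π * u / (2 * EllK k))

/-- Jacobi's theta function `Θ₁(u,k) = 1 + 2 ∑_{n≥1} q^{n²} cos(nπu/K)`. -/
noncomputable def JTheta1 (u k : ℝ) : ℝ :=
  1 + 2 * ∑' n : ℕ, nome k ^ ((n+1)^2) * Real.cos (((n:ℝ)+1) * π * u / EllK k)

/-- Jacobi's zeta function `zn(u,k) = Θ_u(u,k)/Θ(u,k)`. -/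
noncomputable def zn (u k : ℝ) : ℝ := deriv (fun v => JTheta v k) u / JTheta u k

/-- Jacobi's elliptic sine `sn(u,k) = H(u,k)/(√k Θ(u,k))`. -/
noncomputable def sn (u k : ℝ) : ℝ := JH u k / (Real.sqrt k * JTheta u k)

/-- Jacobi's elliptic cosine `cn(u,k) = √(k'/k) H₁(u,k)/Θ(u,k)`. -/
noncomputable def cn (u k : ℝ) : ℝ :=
  Real.sqrt (Real.sqrt (1 - k^2) / k) * JH1 u k / JTheta u k

/-- Jacobi's delta amplitude `dn(u,k) = √(k') Θ₁(u,k)/Θ(u,k)`. -/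
noncomputable def dn (u k : ℝ) : ℝ :=
  Real.sqrt (Real.sqrt (1 - k^2)) * JTheta1 u k / JTheta u k


open Filter

noncomputable def qP (Q : ℝ) (n : ℕ) : ℝ := ∏ i ∈ Finset.range n, (1 - Q^(i+1))
noncomputable def pInf (Q : ℝ) : ℝ := Real.exp (∑' i : ℕ, Real.log (1 - Q^(i+1)))

section qPfacts
variable {Q : ℝ} (hQ0 : 0 < Q) (hQ1 : Q < 1)
include hQ0 hQ1

lemma qfac_pos (i : ℕ) : 0 < 1 - Q^(i+1) := by
  have : Q^(i+1) < 1 := pow_lt_one₀ hQ0.le hQ1 (Nat.succ_ne_zero i)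
  linarith

lemma qP_pos (n : ℕ) : 0 < qP Q n :=
  Finset.prod_pos (fun i _ => qfac_pos hQ0 hQ1 i)

lemma qP_le_one (n : ℕ) : qP Q n ≤ 1 := by
  apply Finset.prod_le_one (fun i _ => (qfac_pos hQ0 hQ1 i).le)
  intro i _
  have : 0 < Q^(i+1) := pow_pos hQ0 _
  linarith

omit hQ0 hQ1 in
omit hQ0 hQ1 in
lemma qP_succ (n : ℕ) : qP Q (n+1) = qP Q n * (1 - Q^(n+1)) :=
  Finset.prod_range_succ _ n

omit hQ0 hQ1 in
lemma neg_log_one_sub_le {x : ℝ} (hx0 : 0 ≤ x) (hx1 : x < 1) :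
    |Real.log (1 - x)| ≤ x / (1 - x) := by
  have h1 : (0:ℝ) < 1 - x := by linarith
  have h2 : Real.log (1 - x) ≤ 0 := Real.log_nonpos (by linarith) (by linarith)
  have h3 : Real.log (1 - x)⁻¹ ≤ (1 - x)⁻¹ - 1 :=
    Real.log_le_sub_one_of_pos (by positivity)
  rw [Real.log_inv] at h3
  have h4 : (1 - x)⁻¹ - 1 = x / (1 - x) := by field_simp; ring
  rw [abs_of_nonpos h2]
  linarith [h3, h4 ▸ h3]

lemma summable_qlog : Summable (fun i : ℕ => Real.log (1 - Q^(i+1))) := by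
  apply Summable.of_norm_bounded (g := fun i : ℕ => Q^(i+1) / (1 - Q))
  · apply Summable.div_const
    exact (summable_geometric_of_lt_one hQ0.le hQ1).mul_left Q |>.congr
      (fun i => by rw [pow_succ]; ring)
  · intro i
    have h1 : Q^(i+1) < 1 := pow_lt_one₀ hQ0.le hQ1 (Nat.succ_ne_zero i)
    have h2 : Q^(i+1) ≤ Q := by
      calc Q^(i+1) ≤ Q^1 := pow_le_pow_of_le_one hQ0.le hQ1.le (by omega)
      _ = Q := pow_one Q
    rw [Real.norm_eq_abs]
    refine (neg_log_one_sub_le (by positivity) h1).trans ?_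
    apply div_le_div_of_nonneg_left (by positivity) (by linarith) (by linarith)

lemma qP_eq_exp (n : ℕ) :
    qP Q n = Real.exp (∑ i ∈ Finset.range n, Real.log (1 - Q^(i+1))) := by
  rw [Real.exp_sum]
  exact Finset.prod_congr rfl (fun i _ => (Real.exp_log (qfac_pos hQ0 hQ1 i)).symm)

omit hQ0 hQ1 in
lemma pInf_pos : 0 < pInf Q := Real.exp_pos _

lemma tendsto_qP : Tendsto (qP Q) atTop (nhds (pInf Q)) := by
  have h1 : Tendsto (fun n => ∑ i ∈ Finset.range n, Real.log (1 - Q^(i+1))) atTop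
      (nhds (∑' i : ℕ, Real.log (1 - Q^(i+1)))) :=
    (summable_qlog hQ0 hQ1).hasSum.tendsto_sum_nat
  have := (Real.continuous_exp.tendsto _).comp h1
  apply this.congr
  intro n
  exact (qP_eq_exp hQ0 hQ1 n).symm

lemma pInf_le_qP (n : ℕ) : pInf Q ≤ qP Q n := by
  rw [qP_eq_exp hQ0 hQ1 n]
  apply Real.exp_le_exp.2
  have hsplit := (summable_qlog hQ0 hQ1).sum_add_tsum_nat_add n
  have htail : ∑' i : ℕ, Real.log (1 - Q^((i+n)+1)) ≤ 0 := by
    apply tsum_nonpos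
    intro i
    exact Real.log_nonpos (qfac_pos hQ0 hQ1 (i+n)).le (by nlinarith [pow_pos hQ0 ((i+n)+1)])
  unfold pInf at *
  linarith [hsplit, htail]



noncomputable def gb (Q : ℝ) (N : ℕ) (m : ℤ) : ℝ :=
  if m.natAbs ≤ N then qP Q (2*N) / (qP Q ((N:ℤ)+m).toNat * qP Q ((N:ℤ)-m).toNat) else 0

omit hQ0 hQ1 in
lemma gb_eq {N : ℕ} {m : ℤ} {p r : ℕ} (hp : (p:ℤ) = (N:ℤ)+m) (hr : (r:ℤ) = (N:ℤ)-m) :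
    gb Q N m = qP Q (2*N) / (qP Q p * qP Q r) := by
  have hm : m.natAbs ≤ N := by omega
  have h1 : ((N:ℤ)+m).toNat = p := by omega
  have h2 : ((N:ℤ)-m).toNat = r := by omega
  unfold gb
  rw [if_pos hm, h1, h2]

omit hQ0 hQ1 in
lemma gb_zero {N : ℕ} {m : ℤ} (hm : N < m.natAbs) : gb Q N m = 0 := by
  unfold gb
  rw [if_neg (by omega)]

lemma gb_rec (N : ℕ) (m : ℤ) :
    gb Q (N+1) m = gb Q N m * (1 + Q^(2*N+1))
      + gb Q N (m-1) * Q ^ ((N:ℤ)+1-m) + gb Q N (m+1) * Q ^ ((N:ℤ)+1+m) := by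
  have hq2N := qP_pos hQ0 hQ1 (2*N)
  have hf : ∀ i:ℕ, (1 - Q^(i+1)) ≠ 0 := fun i => (qfac_pos hQ0 hQ1 i).ne'
  by_cases hm : m.natAbs ≤ N
  · -- main case
    obtain ⟨p, hp⟩ : ∃ p:ℕ, (p:ℤ) = (N:ℤ)+m := ⟨((N:ℤ)+m).toNat, by omega⟩
    obtain ⟨r, hr⟩ : ∃ r:ℕ, (r:ℤ) = (N:ℤ)-m := ⟨((N:ℤ)-m).toNat, by omega⟩
    have hpr : 2*N = p + r := by omega
    have g1 := (qP_pos hQ0 hQ1 p).ne'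
    have g2 := (qP_pos hQ0 hQ1 r).ne'
    have g3 := (qP_pos hQ0 hQ1 (p+1)).ne'
    have g4 := (qP_pos hQ0 hQ1 (r+1)).ne'
    have e1 : gb Q (N+1) m = qP Q (2*N) * ((1-Q^(2*N+1))*(1-Q^(2*N+2)))
        / (qP Q (p+1) * qP Q (r+1)) := by
      rw [gb_eq (N := N+1) (p := p+1) (r := r+1) (by omega) (by omega)]
      rw [show 2*(N+1) = (2*N+1)+1 from by omega, qP_succ, qP_succ]
      rw [show 2*N+1+1 = 2*N+2 from rfl]
      ring
    have e2 : gb Q N m = qP Q (2*N) * ((1-Q^(p+1))*(1-Q^(r+1)))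
        / (qP Q (p+1) * qP Q (r+1)) := by
      rw [gb_eq hp hr, div_eq_div_iff (mul_ne_zero g1 g2) (mul_ne_zero g3 g4),
        qP_succ p, qP_succ r]
      ring
    have e3 : gb Q N (m-1) = qP Q (2*N) * ((1-Q^p)*(1-Q^(p+1)))
        / (qP Q (p+1) * qP Q (r+1)) := by
      by_cases hp0 : p = 0
      · subst hp0
        rw [gb_zero (by omega), pow_zero]
        rw [show (1:ℝ) - 1 = 0 from by ring]
        rw [zero_mul, mul_zero, zero_div]
      · obtain ⟨p', rfl⟩ : ∃ p', p = p'+1 := ⟨p-1, by omega⟩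
        rw [gb_eq (N := N) (m := m-1) (p := p') (r := r+1) (by omega) (by omega)]
        rw [div_eq_div_iff (mul_ne_zero (qP_pos hQ0 hQ1 p').ne' g4) (mul_ne_zero g3 g4),
          qP_succ (p'+1), qP_succ p']
        ring
    have e4 : gb Q N (m+1) = qP Q (2*N) * ((1-Q^r)*(1-Q^(r+1)))
        / (qP Q (p+1) * qP Q (r+1)) := by
      by_cases hr0 : r = 0
      · subst hr0
        rw [gb_zero (by omega), pow_zero]
        rw [show (1:ℝ) - 1 = 0 from by ring]
        rw [zero_mul, mul_zero, zero_div]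
      · obtain ⟨r', rfl⟩ : ∃ r', r = r'+1 := ⟨r-1, by omega⟩
        rw [gb_eq (N := N) (m := m+1) (p := p+1) (r := r') (by omega) (by omega)]
        rw [div_eq_div_iff (mul_ne_zero g3 (qP_pos hQ0 hQ1 r').ne') (mul_ne_zero g3 g4),
          qP_succ (r'+1), qP_succ r']
        ring
    have ez1 : Q ^ ((N:ℤ)+1-m) = Q^(r+1) := by
      rw [show (N:ℤ)+1-m = ((r+1:ℕ):ℤ) from by omega, zpow_natCast]
    have ez2 : Q ^ ((N:ℤ)+1+m) = Q^(p+1) := by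
      rw [show (N:ℤ)+1+m = ((p+1:ℕ):ℤ) from by omega, zpow_natCast]
    have h1 : Q^(2*N+1) = Q^p * Q^r * Q := by
      rw [show 2*N+1 = (p+r)+1 from by omega, pow_succ, pow_add]
    have h2 : Q^(2*N+2) = Q^p * Q^r * Q^2 := by
      rw [show 2*N+2 = (p+r)+2 from by omega, pow_add, pow_add]
    have h3 : Q^(p+1) = Q^p * Q := pow_succ Q p
    have h4 : Q^(r+1) = Q^r * Q := pow_succ Q r
    rw [e1, e2, e3, e4, ez1, ez2, h1, h2, h3, h4]
    generalize Q^p = a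
    generalize Q^r = b
    field_simp
    ring
  · by_cases hm1 : m = (N:ℤ)+1
    · subst hm1
      rw [gb_eq (N := N+1) (p := 2*N+2) (r := 0) (by omega) (by omega)]
      rw [gb_zero (by omega), gb_zero (N := N) (m := (N:ℤ)+1+1) (by omega)]
      rw [gb_eq (N := N) (m := (N:ℤ)+1-1) (p := 2*N) (r := 0) (by omega) (by omega)]
      rw [show qP Q 0 = 1 from rfl]
      rw [show (N:ℤ)+1-((N:ℤ)+1) = 0 from by ring, zpow_zero]
      rw [show 2*(N+1) = 2*N+2 from by omega]
      have h2 : qP Q (2*N+2) ≠ 0 := (qP_pos hQ0 hQ1 _).ne'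
      simp [h2, hq2N.ne']
    · by_cases hm2 : m = -(N:ℤ)-1
      · subst hm2
        rw [gb_eq (N := N+1) (p := 0) (r := 2*N+2) (by omega) (by omega)]
        rw [gb_zero (by omega), gb_zero (N := N) (m := -(N:ℤ)-1-1) (by omega)]
        rw [gb_eq (N := N) (m := -(N:ℤ)-1+1) (p := 0) (r := 2*N) (by omega) (by omega)]
        rw [show qP Q 0 = 1 from rfl]
        rw [show (N:ℤ)+1+(-(N:ℤ)-1) = 0 from by ring, zpow_zero]
        rw [show 2*(N+1) = 2*N+2 from by omega]
        have h2 : qP Q (2*N+2) ≠ 0 := (qP_pos hQ0 hQ1 _).ne'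
        simp [h2, hq2N.ne']
      · rw [gb_zero (by omega), gb_zero (by omega), gb_zero (N := N) (m := m-1) (by omega),
          gb_zero (N := N) (m := m+1) (by omega)]
        ring

end qPfacts

section three
variable {q : ℝ} (hq0 : 0 < q) (hq1 : q < 1)

noncomputable def cf (q : ℝ) (N : ℕ) (m : ℤ) : ℝ := gb (q^2) N m * q ^ (m^2)

lemma cf_zero {N : ℕ} {m : ℤ} (hm : N < m.natAbs) : cf q N m = 0 := by
  unfold cf
  rw [gb_zero hm, zero_mul]

lemma zpow_pow_helper {q : ℝ} (a : ℤ) : ((q^2 : ℝ))^a = q^(2*a) := by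
  rw [← zpow_natCast q 2, ← zpow_mul]
  norm_num

include hq0 hq1

lemma cf_rec (N : ℕ) (m : ℤ) :
    cf q (N+1) m = cf q N m * (1 + q^(4*N+2))
      + cf q N (m-1) * q^(2*N+1) + cf q N (m+1) * q^(2*N+1) := by
  have hQ0 : 0 < q^2 := by positivity
  have hQ1 : q^2 < 1 := by nlinarith
  have hqne : q ≠ 0 := hq0.ne'
  have hrec := gb_rec hQ0 hQ1 N m
  unfold cf
  rw [hrec]
  have E1 : ((q^2)^(2*N+1) : ℝ) = q^(4*N+2) := by
    rw [← pow_mul]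
    congr 1
    omega
  have E2 : ((q^2 : ℝ))^((N:ℤ)+1-m) * q^(m^2) = q^((m-1)^2) * q^(2*N+1) := by
    rw [zpow_pow_helper, ← zpow_natCast q (2*N+1), ← zpow_add₀ hqne, ← zpow_add₀ hqne]
    congr 1
    push_cast
    ring
  have E3 : ((q^2 : ℝ))^((N:ℤ)+1+m) * q^(m^2) = q^((m+1)^2) * q^(2*N+1) := by
    rw [zpow_pow_helper, ← zpow_natCast q (2*N+1), ← zpow_add₀ hqne, ← zpow_add₀ hqne]
    congr 1
    push_cast
    ring
  have T1 : gb (q^2) N m * (1+(q^2)^(2*N+1)) * q^(m^2)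
      = gb (q^2) N m * q^(m^2) * (1+q^(4*N+2)) := by
    rw [E1]; ring
  have T2 : gb (q^2) N (m-1) * (q^2)^((N:ℤ)+1-m) * q^(m^2)
      = gb (q^2) N (m-1) * q^((m-1)^2) * q^(2*N+1) := by
    rw [mul_assoc, E2]; ring
  have T3 : gb (q^2) N (m+1) * (q^2)^((N:ℤ)+1+m) * q^(m^2)
      = gb (q^2) N (m+1) * q^((m+1)^2) * q^(2*N+1) := by
    rw [mul_assoc, E3]; ring
  rw [add_mul, add_mul, T1, T2, T3]

end three

noncomputable def TS (q : ℝ) (z : ℂ) (N : ℕ) : ℂ :=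
  ∑ m ∈ Finset.Icc (-(N:ℤ)) (N:ℤ), (cf q N m : ℂ) * z^m

lemma shift_sum (f : ℤ → ℂ) (a b c : ℤ) :
    ∑ m ∈ Finset.Icc (a+c) (b+c), f m = ∑ m ∈ Finset.Icc a b, f (m+c) := by
  rw [← Finset.map_add_right_Icc, Finset.sum_map]
  simp

section four
variable {q : ℝ} (hq0 : 0 < q) (hq1 : q < 1)
include hq0 hq1

lemma jacobi_finite (z : ℂ) (hz : z ≠ 0) (N : ℕ) :
    ∏ j ∈ Finset.range N, ((1 + z*(q:ℂ)^(2*j+1)) * (1 + z⁻¹*(q:ℂ)^(2*j+1))) = TS q z N := by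
  induction N with
  | zero =>
      norm_num [TS, cf, gb, qP]
  | succ N ih =>
      rw [Finset.prod_range_succ, ih]
      have hIcc : Finset.Icc (-((N+1:ℕ)):ℤ) ((N+1:ℕ):ℤ) = Finset.Icc (-(N:ℤ)-1) ((N:ℤ)+1) := by
        congr 1 <;> push_cast <;> ring
      have crec : ∀ m:ℤ, ((cf q (N+1) m : ℝ) : ℂ)
          = (cf q N m : ℂ) * (1+(q:ℂ)^(4*N+2)) + (cf q N (m-1):ℂ) * (q:ℂ)^(2*N+1)
            + (cf q N (m+1):ℂ) * (q:ℂ)^(2*N+1) := by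
        intro m
        rw [cf_rec hq0 hq1 N m]
        push_cast
        ring
      have expand : TS q z (N+1)
          = (∑ m ∈ Finset.Icc (-(N:ℤ)-1) ((N:ℤ)+1), (cf q N m : ℂ) * (1+(q:ℂ)^(4*N+2)) * z^m)
          + (∑ m ∈ Finset.Icc (-(N:ℤ)-1) ((N:ℤ)+1), (cf q N (m-1) : ℂ) * (q:ℂ)^(2*N+1) * z^m)
          + (∑ m ∈ Finset.Icc (-(N:ℤ)-1) ((N:ℤ)+1), (cf q N (m+1) : ℂ) * (q:ℂ)^(2*N+1) * z^m) := by
        unfold TS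
        rw [hIcc, ← Finset.sum_add_distrib, ← Finset.sum_add_distrib]
        apply Finset.sum_congr rfl
        intro m _
        rw [crec m]
        ring
      have hsub : Finset.Icc (-(N:ℤ)) (N:ℤ) ⊆ Finset.Icc (-(N:ℤ)-1) ((N:ℤ)+1) := by
        apply Finset.Icc_subset_Icc <;> omega
      have SA : (∑ m ∈ Finset.Icc (-(N:ℤ)-1) ((N:ℤ)+1), (cf q N m : ℂ) * (1+(q:ℂ)^(4*N+2)) * z^m)
          = TS q z N * (1+(q:ℂ)^(4*N+2)) := by
        rw [← Finset.sum_subset hsub (by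
          intro m hm1 hm2
          have : N < m.natAbs := by
            simp only [Finset.mem_Icc] at hm1 hm2
            omega
          rw [cf_zero this]
          norm_num)]
        unfold TS
        rw [Finset.sum_mul]
        apply Finset.sum_congr rfl
        intro m _
        ring
      have SB : (∑ m ∈ Finset.Icc (-(N:ℤ)-1) ((N:ℤ)+1), (cf q N (m-1) : ℂ) * (q:ℂ)^(2*N+1) * z^m)
          = TS q z N * ((q:ℂ)^(2*N+1) * z) := by
        have e := shift_sum (fun m => (cf q N (m-1) : ℂ) * (q:ℂ)^(2*N+1) * z^m)
          (-(N:ℤ)-2) ((N:ℤ)) 1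
        rw [show (-(N:ℤ)-2+1) = -(N:ℤ)-1 from by ring] at e
        rw [e]
        have hsub2 : Finset.Icc (-(N:ℤ)) (N:ℤ) ⊆ Finset.Icc (-(N:ℤ)-2) ((N:ℤ)) := by
          apply Finset.Icc_subset_Icc <;> omega
        rw [← Finset.sum_subset hsub2 (by
          intro m hm1 hm2
          have : N < (m+1-1).natAbs := by
            simp only [Finset.mem_Icc] at hm1 hm2
            omega
          rw [cf_zero this]
          norm_num)]
        unfold TS
        rw [Finset.sum_mul]
        apply Finset.sum_congr rfl
        intro m _
        rw [show m+1-1 = m from by ring, zpow_add_one₀ hz m]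
        ring
      have SC : (∑ m ∈ Finset.Icc (-(N:ℤ)-1) ((N:ℤ)+1), (cf q N (m+1) : ℂ) * (q:ℂ)^(2*N+1) * z^m)
          = TS q z N * ((q:ℂ)^(2*N+1) * z⁻¹) := by
        have e := shift_sum (fun m => (cf q N (m+1) : ℂ) * (q:ℂ)^(2*N+1) * z^m)
          (-(N:ℤ)) ((N:ℤ)+2) (-1)
        rw [show (-(N:ℤ)+(-1)) = -(N:ℤ)-1 from by ring,
          show ((N:ℤ)+2+(-1)) = (N:ℤ)+1 from by ring] at e
        rw [e]
        have hsub2 : Finset.Icc (-(N:ℤ)) (N:ℤ) ⊆ Finset.Icc (-(N:ℤ)) ((N:ℤ)+2) := by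
          apply Finset.Icc_subset_Icc <;> omega
        rw [← Finset.sum_subset hsub2 (by
          intro m hm1 hm2
          have : N < (m+(-1)+1).natAbs := by
            simp only [Finset.mem_Icc] at hm1 hm2
            omega
          rw [cf_zero this]
          norm_num)]
        unfold TS
        rw [Finset.sum_mul]
        apply Finset.sum_congr rfl
        intro m _
        rw [show m+(-1)+1 = m from by ring, show m+(-1) = m-1 from by ring,
          zpow_sub_one₀ hz m]
        ring
      have fact : ∀ w : ℂ, (1 + z*w) * (1 + z⁻¹*w) = 1 + w*w + w*z + w*z⁻¹ := by
        intro w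
        field_simp
        ring
      have hpow : ((q:ℂ)^(2*N+1)) * ((q:ℂ)^(2*N+1)) = (q:ℂ)^(4*N+2) := by
        rw [← pow_add]
        congr 1
        omega
      rw [expand, SA, SB, SC, fact ((q:ℂ)^(2*N+1)), hpow]
      ring

end four

section gblim
variable {Q : ℝ} (hQ0 : 0 < Q) (hQ1 : Q < 1)
include hQ0 hQ1

lemma gb_nonneg (N : ℕ) (m : ℤ) : 0 ≤ gb Q N m := by
  unfold gb
  split_ifs
  · exact (div_pos (qP_pos hQ0 hQ1 _) (mul_pos (qP_pos hQ0 hQ1 _) (qP_pos hQ0 hQ1 _))).le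
  · exact le_refl 0

lemma gb_le (N : ℕ) (m : ℤ) : gb Q N m ≤ (pInf Q)⁻¹ * (pInf Q)⁻¹ := by
  have hp : 0 < pInf Q := pInf_pos
  unfold gb
  split_ifs with h
  · calc qP Q (2*N) / (qP Q (((N:ℤ)+m).toNat) * qP Q (((N:ℤ)-m).toNat))
        ≤ 1 / (pInf Q * pInf Q) := by
          apply div_le_div₀ (by positivity) (qP_le_one hQ0 hQ1 _) (by positivity)
          exact mul_le_mul (pInf_le_qP hQ0 hQ1 _) (pInf_le_qP hQ0 hQ1 _) hp.le
            (qP_pos hQ0 hQ1 _).le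
      _ = (pInf Q)⁻¹ * (pInf Q)⁻¹ := by field_simp
  · positivity

lemma gb_tendsto (m : ℤ) : Tendsto (fun N => gb Q N m) atTop (nhds (pInf Q)⁻¹) := by
  have hp : 0 < pInf Q := pInf_pos
  have h2 : Tendsto (fun N:ℕ => qP Q (2*N)) atTop (nhds (pInf Q)) :=
    (tendsto_qP hQ0 hQ1).comp (tendsto_atTop_atTop.2 fun b => ⟨b, fun a ha => by omega⟩)
  have h3 : Tendsto (fun N:ℕ => qP Q (((N:ℤ)+m).toNat)) atTop (nhds (pInf Q)) :=
    (tendsto_qP hQ0 hQ1).comp (tendsto_atTop_atTop.2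
      fun b => ⟨b + m.natAbs, fun a ha => by omega⟩)
  have h4 : Tendsto (fun N:ℕ => qP Q (((N:ℤ)-m).toNat)) atTop (nhds (pInf Q)) :=
    (tendsto_qP hQ0 hQ1).comp (tendsto_atTop_atTop.2
      fun b => ⟨b + m.natAbs, fun a ha => by omega⟩)
  have h5 := h2.div (h3.mul h4) (by positivity)
  have heq : pInf Q / (pInf Q * pInf Q) = (pInf Q)⁻¹ := by field_simp
  rw [heq] at h5
  apply h5.congr'
  filter_upwards [eventually_ge_atTop m.natAbs] with N hN
  simp only [Pi.div_apply]
  unfold gb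
  rw [if_pos hN]

end gblim

section zsum
variable {q : ℝ} (hq0 : 0 < q) (hq1 : q < 1)
include hq0 hq1

lemma summable_qnsq : Summable (fun n:ℕ => q ^ (n^2)) := by
  refine Summable.of_nonneg_of_le (fun n => by positivity)
    (fun n => pow_le_pow_of_le_one hq0.le hq1.le (Nat.le_self_pow two_ne_zero n))
    (summable_geometric_of_lt_one hq0.le hq1)

lemma summable_zq : Summable (fun m:ℤ => q ^ (m^2)) := by
  apply Summable.of_nat_of_neg
  · apply (summable_qnsq hq0 hq1).congr
    intro n
    rw [show ((n:ℤ))^2 = ((n^2:ℕ):ℤ) from by push_cast; ring, zpow_natCast]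
  · apply (summable_qnsq hq0 hq1).congr
    intro n
    rw [show (-(n:ℤ))^2 = ((n^2:ℕ):ℤ) from by push_cast; ring, zpow_natCast]

end zsum

noncomputable def Aj (q x : ℝ) (j : ℕ) : ℝ := 1 - 2*q^(2*j+1)*x + q^(4*j+2)

section ajfacts
variable {q x : ℝ} (hq0 : 0 < q) (hq1 : q < 1) (hx : |x| ≤ 1)
include hq0 hq1 hx

lemma Aj_sq (j : ℕ) : q^(4*j+2) = (q^(2*j+1))^2 := by
  rw [← pow_mul]
  congr 1
  omega

lemma Aj_pos (j : ℕ) : 0 < Aj q x j := by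
  have ht0 : 0 < q^(2*j+1) := by positivity
  have ht1 : q^(2*j+1) < 1 := pow_lt_one₀ hq0.le hq1 (by omega)
  have hx1 : x ≤ 1 := (abs_le.1 hx).2
  unfold Aj
  rw [Aj_sq hq0 hq1 hx]
  nlinarith [mul_pos (by linarith : (0:ℝ) < 1 - q^(2*j+1)) (by linarith : (0:ℝ) < 1 - q^(2*j+1)),
    mul_nonneg ht0.le (by linarith : (0:ℝ) ≤ 1 - x)]

lemma logAj_bound (j : ℕ) : |Real.log (Aj q x j)| ≤ 2*q^(2*j+1)/(1-q) := by
  have ht0 : 0 < q^(2*j+1) := by positivity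
  have ht1 : q^(2*j+1) < 1 := pow_lt_one₀ hq0.le hq1 (by omega)
  have htq : q^(2*j+1) ≤ q := by
    calc q^(2*j+1) ≤ q^1 := pow_le_pow_of_le_one hq0.le hq1.le (by omega)
    _ = q := pow_one q
  have hx1 : x ≤ 1 := (abs_le.1 hx).2
  have hx2 : -1 ≤ x := (abs_le.1 hx).1
  have hAle : Aj q x j ≤ (1+q^(2*j+1))^2 := by
    unfold Aj
    rw [Aj_sq hq0 hq1 hx]
    nlinarith [mul_nonneg ht0.le (by linarith : (0:ℝ) ≤ 1 + x)]
  have hAge : (1-q^(2*j+1))^2 ≤ Aj q x j := by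
    unfold Aj
    rw [Aj_sq hq0 hq1 hx]
    nlinarith [mul_nonneg ht0.le (by linarith : (0:ℝ) ≤ 1 - x)]
  have hup : Real.log (Aj q x j) ≤ 2*q^(2*j+1)/(1-q) := by
    calc Real.log (Aj q x j) ≤ Real.log ((1+q^(2*j+1))^2) :=
          Real.log_le_log (Aj_pos hq0 hq1 hx j) hAle
    _ = 2 * Real.log (1+q^(2*j+1)) := by
          rw [Real.log_pow]; push_cast; ring
    _ ≤ 2 * q^(2*j+1) := by
          have := Real.log_le_sub_one_of_pos (show (0:ℝ) < 1+q^(2*j+1) by linarith)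
          linarith
    _ ≤ 2*q^(2*j+1)/(1-q) := by
          rw [div_eq_mul_inv]
          have h1 : (1:ℝ) ≤ (1-q)⁻¹ := by
            rw [le_inv_comm₀] <;> linarith
          nlinarith
  have hlo : -(2*q^(2*j+1)/(1-q)) ≤ Real.log (Aj q x j) := by
    have h1 : Real.log ((1-q^(2*j+1))^2) ≤ Real.log (Aj q x j) := by
      apply Real.log_le_log (by nlinarith) hAge
    have h2 : Real.log ((1-q^(2*j+1))^2) = 2 * Real.log (1-q^(2*j+1)) := by
      rw [Real.log_pow]; push_cast; ring
    have h3 := neg_log_one_sub_le (x := q^(2*j+1)) ht0.le ht1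
    have h4 : -(q^(2*j+1)/(1-q^(2*j+1))) ≤ Real.log (1-q^(2*j+1)) := by
      rw [abs_le] at h3
      linarith [h3.1]
    have h5 : q^(2*j+1)/(1-q^(2*j+1)) ≤ q^(2*j+1)/(1-q) := by
      apply div_le_div_of_nonneg_left ht0.le (by linarith) (by linarith)
    have h6 : -(q^(2*j+1)/(1-q)) ≤ Real.log (1 - q^(2*j+1)) := by linarith
    have h7 : -(2*q^(2*j+1)/(1-q)) = 2 * (-(q^(2*j+1)/(1-q))) := by ring
    rw [h7]
    nlinarith [h1, h2, h6]
  rw [abs_le]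
  exact ⟨hlo, hup⟩

lemma summable_logAj : Summable (fun j => Real.log (Aj q x j)) := by
  apply Summable.of_norm_bounded (g := fun j : ℕ => (2/(1-q)) * q^(j+1))
  · apply Summable.mul_left
    exact (summable_geometric_of_lt_one hq0.le hq1).mul_left q |>.congr
      (fun i => by rw [pow_succ]; ring)
  · intro j
    rw [Real.norm_eq_abs]
    refine (logAj_bound hq0 hq1 hx j).trans ?_
    have : q^(2*j+1) ≤ q^(j+1) := pow_le_pow_of_le_one hq0.le hq1.le (by omega)
    rw [div_eq_mul_inv, div_eq_mul_inv]
    have h1 : (0:ℝ) < (1-q)⁻¹ := by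
      rw [inv_pos]; linarith
    nlinarith

lemma tendsto_prodAj : Tendsto (fun N => ∏ j ∈ Finset.range N, Aj q x j) atTop
    (nhds (Real.exp (∑' j, Real.log (Aj q x j)))) := by
  have h1 : Tendsto (fun n => ∑ j ∈ Finset.range n, Real.log (Aj q x j)) atTop
      (nhds (∑' j : ℕ, Real.log (Aj q x j))) :=
    (summable_logAj hq0 hq1 hx).hasSum.tendsto_sum_nat
  have := (Real.continuous_exp.tendsto _).comp h1
  apply this.congr
  intro n
  rw [Function.comp_apply, Real.exp_sum]
  exact Finset.prod_congr rfl (fun j _ => (Real.exp_log (Aj_pos hq0 hq1 hx j)))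

end ajfacts

section tslim
variable {q : ℝ} (hq0 : 0 < q) (hq1 : q < 1)
include hq0 hq1

lemma cf_abs_le (N : ℕ) (m : ℤ) :
    ‖(cf q N m : ℝ)‖ ≤ (pInf (q^2))⁻¹ * (pInf (q^2))⁻¹ * q ^ (m^2) := by
  have hQ0 : 0 < q^2 := by positivity
  have hQ1 : q^2 < 1 := by nlinarith
  have hz : (0:ℝ) < q ^ (m^2) := zpow_pos hq0 _
  rw [Real.norm_eq_abs]
  unfold cf
  rw [abs_of_nonneg (mul_nonneg (gb_nonneg hQ0 hQ1 N m) hz.le)]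
  exact mul_le_mul_of_nonneg_right (gb_le hQ0 hQ1 N m) hz.le

lemma TS_tendsto (z : ℂ) (hz : ‖z‖ = 1) :
    Tendsto (fun N => TS q z N) atTop
      (nhds (∑' m:ℤ, (((pInf (q^2))⁻¹ * q ^ (m^2) : ℝ) : ℂ) * z^m)) := by
  have hQ0 : 0 < q^2 := by positivity
  have hQ1 : q^2 < 1 := by nlinarith
  have key := tendsto_tsum_of_dominated_convergence
    (f := fun (N : ℕ) (m:ℤ) => ((cf q N m : ℝ):ℂ) * z^m)
    (g := fun m:ℤ => (((pInf (q^2))⁻¹ * q ^ (m^2) : ℝ):ℂ) * z^m)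
    (bound := fun m:ℤ => (pInf (q^2))⁻¹ * (pInf (q^2))⁻¹ * q^(m^2))
    (𝓕 := atTop) ?_ ?_ ?_
  · apply key.congr
    intro N
    apply tsum_eq_sum
    intro m hm
    have h0 : N < m.natAbs := by
      simp only [Finset.mem_Icc] at hm
      omega
    have h1 : cf q N m = 0 := cf_zero h0
    simp [h1]
  · exact ((summable_zq hq0 hq1).mul_left _)
  · intro m
    have h1 : Tendsto (fun N => gb (q^2) N m * q ^ (m^2)) atTop
        (nhds ((pInf (q^2))⁻¹ * q ^ (m^2))) :=
      (gb_tendsto hQ0 hQ1 m).mul_const _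
    have h2 := (Complex.continuous_ofReal.tendsto _).comp h1
    exact h2.mul_const _
  · filter_upwards with N
    intro m
    rw [norm_mul, norm_zpow, hz, one_zpow, mul_one, Complex.norm_real]
    exact cf_abs_le hq0 hq1 N m

end tslim

section six
variable {q : ℝ} (hq0 : 0 < q) (hq1 : q < 1)
include hq0 hq1

lemma bilateral_eq (θ : ℝ) :
    (∑' m:ℤ, (((pInf (q^2))⁻¹ * q ^ (m^2) : ℝ) : ℂ) * (-Complex.exp (θ*Complex.I))^m)
      = ((Real.exp (∑' j, Real.log (Aj q (Real.cos θ) j)) : ℝ) : ℂ) := by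
  set z : ℂ := -Complex.exp (θ*Complex.I) with hzdef
  have hz0 : z ≠ 0 := by
    simp [hzdef, Complex.exp_ne_zero]
  have hznorm : ‖z‖ = 1 := by
    rw [hzdef, norm_neg]
    exact Complex.norm_exp_ofReal_mul_I θ
  have hxabs : |Real.cos θ| ≤ 1 := Real.abs_cos_le_one θ
  have hzinv : z⁻¹ = -Complex.exp (-θ*Complex.I) := by
    apply inv_eq_of_mul_eq_one_right
    rw [hzdef, neg_mul_neg, ← Complex.exp_add]
    rw [show (θ:ℂ)*Complex.I + -θ*Complex.I = 0 from by push_cast; ring, Complex.exp_zero]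
  have hfac : ∀ j:ℕ, (1 + z*(q:ℂ)^(2*j+1)) * (1 + z⁻¹*(q:ℂ)^(2*j+1))
      = ((Aj q (Real.cos θ) j : ℝ) : ℂ) := by
    intro j
    have e1 : z + z⁻¹ = -(2 * Complex.cos (θ:ℂ)) := by
      rw [hzinv, hzdef, Complex.two_cos]
      push_cast
      ring
    have e2 : z * z⁻¹ = 1 := mul_inv_cancel₀ hz0
    have e3 : (1 + z*(q:ℂ)^(2*j+1)) * (1 + z⁻¹*(q:ℂ)^(2*j+1))
        = 1 + (z + z⁻¹)*(q:ℂ)^(2*j+1) + (z*z⁻¹)*((q:ℂ)^(2*j+1)*(q:ℂ)^(2*j+1)) := by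
      ring
    have e4 : (q:ℂ)^(2*j+1)*(q:ℂ)^(2*j+1) = (q:ℂ)^(4*j+2) := by
      rw [← pow_add]
      congr 1
      omega
    rw [e3, e1, e2, e4]
    unfold Aj
    push_cast [Complex.ofReal_cos]
    ring
  have hprod : ∀ N, ∏ j ∈ Finset.range N, ((1 + z*(q:ℂ)^(2*j+1)) * (1 + z⁻¹*(q:ℂ)^(2*j+1)))
      = (((∏ j ∈ Finset.range N, Aj q (Real.cos θ) j : ℝ)) : ℂ) := by
    intro N
    rw [Finset.prod_congr rfl (fun j _ => hfac j)]
    push_cast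
    rfl
  have hlim1 := TS_tendsto hq0 hq1 z hznorm
  have hlim2 : Tendsto (fun N => TS q z N) atTop
      (nhds ((Real.exp (∑' j, Real.log (Aj q (Real.cos θ) j)) : ℝ) : ℂ)) := by
    have h := tendsto_prodAj hq0 hq1 hxabs
    have h2 := (Complex.continuous_ofReal.tendsto _).comp h
    apply h2.congr
    intro N
    rw [Function.comp_apply, ← hprod N, jacobi_finite hq0 hq1 z hz0 N]
  exact tendsto_nhds_unique hlim1 hlim2

lemma theta_prod (θ : ℝ) :
    1 + 2*∑' n:ℕ, (-1:ℝ)^(n+1) * q^((n+1)^2) * Real.cos (((n:ℝ)+1)*θ)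
      = pInf (q^2) * Real.exp (∑' j, Real.log (Aj q (Real.cos θ) j)) := by
  have hQ0 : 0 < q^2 := by positivity
  have hQ1 : q^2 < 1 := by nlinarith
  have hP : 0 < pInf (q^2) := pInf_pos
  set z : ℂ := -Complex.exp (θ*Complex.I) with hzdef
  have hz0 : z ≠ 0 := by
    simp [hzdef, Complex.exp_ne_zero]
  have hznorm : ‖z‖ = 1 := by
    rw [hzdef, norm_neg]
    exact Complex.norm_exp_ofReal_mul_I θ
  set g : ℤ → ℂ := fun m => ((q ^ (m^2) : ℝ) : ℂ) * z^m with hgdef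
  -- sum of g equals pInf * exp(...)
  have hgsum : ∑' m:ℤ, g m
      = (pInf (q^2) : ℂ) * ((Real.exp (∑' j, Real.log (Aj q (Real.cos θ) j)) : ℝ) : ℂ) := by
    rw [← bilateral_eq hq0 hq1 θ, ← tsum_mul_left]
    apply tsum_congr
    intro m
    rw [hgdef]
    have hPne : ((pInf (q^2):ℝ):ℂ) ≠ 0 := by
      exact_mod_cast hP.ne'
    push_cast
    field_simp
    rw [hzdef]
  -- norms
  have hnorm : ∀ m : ℤ, ‖g m‖ = q ^ (m^2) := by
    intro m
    rw [hgdef]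
    simp only []
    rw [norm_mul, norm_zpow, hznorm, one_zpow, mul_one, Complex.norm_real,
      Real.norm_eq_abs, abs_of_pos (zpow_pos hq0 _)]
  have hqn : ∀ n:ℕ, (q:ℝ) ^ (((n:ℤ))^2) = q^(n^2) := by
    intro n
    rw [show ((n:ℤ))^2 = ((n^2:ℕ):ℤ) from by push_cast; ring, zpow_natCast]
  have hqnn : ∀ n:ℕ, (q:ℝ) ^ ((-((n:ℤ)))^2) = q^(n^2) := by
    intro n
    rw [show (-(n:ℤ))^2 = ((n^2:ℕ):ℤ) from by push_cast; ring, zpow_natCast]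
  have hsnat : Summable (fun n:ℕ => g n) := by
    apply Summable.of_norm_bounded (summable_qnsq hq0 hq1)
    intro n
    rw [hnorm, hqn]
  have hsneg : Summable (fun n:ℕ => g (-((n:ℤ)+1))) := by
    apply Summable.of_norm_bounded ((summable_qnsq hq0 hq1).comp_injective
      (add_left_injective 1))
    intro n
    rw [hnorm]
    rw [show (-((n:ℤ)+1))^2 = (((n+1)^2 : ℕ):ℤ) from by push_cast; ring, zpow_natCast]
    exact le_refl _
  have hsnat1 : Summable (fun n:ℕ => g ((n:ℤ)+1)) := by
    apply Summable.of_norm_bounded ((summable_qnsq hq0 hq1).comp_injective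
      (add_left_injective 1))
    intro n
    rw [hnorm]
    rw [show (((n:ℤ))+1)^2 = (((n+1)^2 : ℕ):ℤ) from by push_cast; ring, zpow_natCast]
    exact le_refl _
  -- decompose
  have hdec : ∑' m:ℤ, g m = g 0 + (∑' n:ℕ, g ((n:ℤ)+1) + ∑' n:ℕ, g (-((n:ℤ)+1))) := by
    rw [tsum_of_nat_of_neg_add_one hsnat (by
      apply hsneg.congr
      intro n
      norm_num)]
    rw [Summable.tsum_eq_zero_add hsnat]
    have h1 : ∀ n:ℕ, g (((n+1:ℕ)):ℤ) = g ((n:ℤ)+1) := fun n => by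
      have e : (((n+1:ℕ)):ℤ) = ((n:ℤ)+1) := by push_cast; ring
      rw [e]
    rw [tsum_congr h1]
    try push_cast
    try ring
  have hg0 : g 0 = 1 := by
    rw [hgdef]
    norm_num
  -- pair identity
  have hpair : ∀ n:ℕ, g ((n:ℤ)+1) + g (-((n:ℤ)+1))
      = (((2 * ((-1:ℝ)^(n+1) * q^((n+1)^2) * Real.cos (((n:ℝ)+1)*θ))) : ℝ) : ℂ) := by
    intro n
    have hq1' : (q:ℝ) ^ (((n:ℤ)+1)^2) = q^((n+1)^2) := by
      rw [show ((n:ℤ)+1)^2 = (((n+1)^2 : ℕ):ℤ) from by push_cast; ring, zpow_natCast]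
    have hq2' : (q:ℝ) ^ ((-((n:ℤ)+1))^2) = q^((n+1)^2) := by
      rw [show (-((n:ℤ)+1))^2 = (((n+1)^2 : ℕ):ℤ) from by push_cast; ring, zpow_natCast]
    have hzp : z ^ ((n:ℤ)+1) = (-1:ℂ)^(n+1) * Complex.exp ((((n:ℝ)+1)*θ : ℝ) * Complex.I) := by
      rw [show ((n:ℤ)+1) = (((n+1:ℕ)):ℤ) from by push_cast; ring, zpow_natCast, hzdef]
      rw [neg_pow, ← Complex.exp_nat_mul]
      congr 2
      push_cast
      ring
    have hzm : z ^ (-((n:ℤ)+1)) = (-1:ℂ)^(n+1) * Complex.exp (-((((n:ℝ)+1)*θ : ℝ) * Complex.I)) := by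
      rw [zpow_neg, hzp, mul_inv, ← Complex.exp_neg]
      congr 1
      rw [← inv_pow, inv_neg, inv_one]
    rw [hgdef]
    simp only []
    rw [hq1', hq2', hzp, hzm]
    have hcos := Complex.two_cos (x := ((((n:ℝ)+1)*θ : ℝ) : ℂ))
    push_cast [Complex.ofReal_cos]
    push_cast at hcos
    rw [show (-(((n:ℂ)+1) * (θ:ℂ))) * Complex.I = -((((n:ℂ)+1)) * (θ:ℂ) * Complex.I) from by
      ring] at hcos
    linear_combination (-((q:ℂ) ^ ((n+1)^2)) * (-1:ℂ)^(n+1)) * hcos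
  -- combine
  have hcomb : ∑' n:ℕ, g ((n:ℤ)+1) + ∑' n:ℕ, g (-((n:ℤ)+1))
      = ((2 * ∑' n:ℕ, ((-1:ℝ)^(n+1) * q^((n+1)^2) * Real.cos (((n:ℝ)+1)*θ)) : ℝ) : ℂ) := by
    rw [← Summable.tsum_add hsnat1 hsneg, tsum_congr hpair]
    rw [← Complex.ofReal_tsum]
    congr 1
    rw [← tsum_mul_left]
  have : ((1 + 2*∑' n:ℕ, (-1:ℝ)^(n+1) * q^((n+1)^2) * Real.cos (((n:ℝ)+1)*θ) : ℝ) : ℂ)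
      = ((pInf (q^2) * Real.exp (∑' j, Real.log (Aj q (Real.cos θ) j)) : ℝ) : ℂ) := by
    rw [Complex.ofReal_mul]
    rw [← hgsum, hdec, hg0, hcomb]
    push_cast
    ring
  exact_mod_cast this

end six

section seven

lemma cross_ineq {t1 t2 x y : ℝ} (h1 : 0 < t1) (h2 : t1 < t2) (h3 : t2 < 1) (hxy : x < y) :
    (1-2*t1*x+t1^2) * (1-2*t2*y+t2^2) < (1-2*t2*x+t2^2) * (1-2*t1*y+t1^2) := by
  have key : (1-2*t2*x+t2^2) * (1-2*t1*y+t1^2) - (1-2*t1*x+t1^2) * (1-2*t2*y+t2^2)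
      = 2*(y-x)*(t2-t1)*(1-t1*t2) := by ring
  have h4 : 0 < 1 - t1*t2 := by nlinarith
  nlinarith [mul_pos (mul_pos (by linarith : (0:ℝ) < y-x) (by linarith : (0:ℝ) < t2-t1)) h4]

lemma Aj_form (q x : ℝ) (j : ℕ) : Aj q x j = 1 - 2*q^(2*j+1)*x + (q^(2*j+1))^2 := by
  unfold Aj
  rw [← pow_mul]
  congr 2
  omega

lemma Dterm_lt {q1 q2 x y : ℝ} (hq1 : 0 < q1) (h12 : q1 < q2) (hq2 : q2 < 1)
    (hxy : x < y) (hx : |x| ≤ 1) (hy : |y| ≤ 1) (j : ℕ) :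
    Real.log (Aj q1 x j) - Real.log (Aj q1 y j)
      < Real.log (Aj q2 x j) - Real.log (Aj q2 y j) := by
  have hq10 : 0 < q1 := hq1
  have hq11 : q1 < 1 := lt_trans h12 hq2
  have hq20 : 0 < q2 := lt_trans hq1 h12
  have p1x := Aj_pos hq10 hq11 hx j
  have p1y := Aj_pos hq10 hq11 hy j
  have p2x := Aj_pos hq20 hq2 hx j
  have p2y := Aj_pos hq20 hq2 hy j
  have ht : q1^(2*j+1) < q2^(2*j+1) := by
    apply pow_lt_pow_left₀ h12 hq10.le
    omega
  have ht0 : 0 < q1^(2*j+1) := by positivity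
  have ht2 : q2^(2*j+1) < 1 := pow_lt_one₀ hq20.le hq2 (by omega)
  have hcross : Aj q1 x j * Aj q2 y j < Aj q2 x j * Aj q1 y j := by
    rw [Aj_form, Aj_form, Aj_form, Aj_form]
    exact cross_ineq ht0 ht ht2 hxy
  have hlog := Real.log_lt_log (mul_pos p1x p2y) hcross
  rw [Real.log_mul p1x.ne' p2y.ne', Real.log_mul p2x.ne' p1y.ne'] at hlog
  linarith

lemma Dsum_lt {q1 q2 x y : ℝ} (hq1 : 0 < q1) (h12 : q1 < q2) (hq2 : q2 < 1)
    (hxy : x < y) (hx : |x| ≤ 1) (hy : |y| ≤ 1) :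
    (∑' j:ℕ, (Real.log (Aj q1 x j) - Real.log (Aj q1 y j)))
      < ∑' j:ℕ, (Real.log (Aj q2 x j) - Real.log (Aj q2 y j)) := by
  have hq11 : q1 < 1 := lt_trans h12 hq2
  have hq20 : 0 < q2 := lt_trans hq1 h12
  have s1 : Summable (fun j:ℕ => Real.log (Aj q1 x j) - Real.log (Aj q1 y j)) :=
    (summable_logAj hq1 hq11 hx).sub (summable_logAj hq1 hq11 hy)
  have s2 : Summable (fun j:ℕ => Real.log (Aj q2 x j) - Real.log (Aj q2 y j)) :=
    (summable_logAj hq20 hq2 hx).sub (summable_logAj hq20 hq2 hy)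
  exact Summable.tsum_lt_tsum (i := 0)
    (fun j => (Dterm_lt hq1 h12 hq2 hxy hx hy j).le)
    (Dterm_lt hq1 h12 hq2 hxy hx hy 0) s1 s2

-- the theta ratio as exponential
lemma theta_ratio {q x y : ℝ} (hq0 : 0 < q) (hq1 : q < 1) (hx : |x| ≤ 1) (hy : |y| ≤ 1)
    (θ1 θ2 : ℝ) (hθ1 : Real.cos θ1 = x) (hθ2 : Real.cos θ2 = y) :
    (1 + 2*∑' n:ℕ, (-1:ℝ)^(n+1) * q^((n+1)^2) * Real.cos (((n:ℝ)+1)*θ1))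
      / (1 + 2*∑' n:ℕ, (-1:ℝ)^(n+1) * q^((n+1)^2) * Real.cos (((n:ℝ)+1)*θ2))
    = Real.exp (∑' j:ℕ, (Real.log (Aj q x j) - Real.log (Aj q y j))) := by
  have hP : 0 < pInf (q^2) := pInf_pos
  rw [theta_prod hq0 hq1 θ1, theta_prod hq0 hq1 θ2, hθ1, hθ2]
  rw [mul_div_mul_left _ _ hP.ne']
  rw [← Real.exp_sub]
  congr 1
  exact (Summable.tsum_sub (summable_logAj hq0 hq1 hx) (summable_logAj hq0 hq1 hy)).symm

end seven

lemma ellK_fact {k : ℝ} (hk : k^2 < 1) (θ : ℝ) : 0 < 1 - k^2 * Real.sin θ ^ 2 := by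
  nlinarith [Real.sin_sq_le_one θ, sq_nonneg (k * Real.sin θ), Real.sin_sq_le_one θ]

lemma ellK_cont {k : ℝ} (hk : k^2 < 1) :
    Continuous (fun θ => 1 / Real.sqrt (1 - k^2 * Real.sin θ ^ 2)) := by
  apply Continuous.div continuous_const
  · exact (continuous_const.sub (continuous_const.mul ((Real.continuous_sin).pow 2))).sqrt
  · intro θ
    exact ne_of_gt (Real.sqrt_pos.2 (ellK_fact hk θ))

lemma EllK_pos {k : ℝ} (hk : k^2 < 1) : 0 < EllK k := by
  apply intervalIntegral.intervalIntegral_pos_of_pos _ _ (by positivity)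
  · exact ((ellK_cont hk).intervalIntegrable _ _)
  · intro θ
    exact div_pos one_pos (Real.sqrt_pos.2 (ellK_fact hk θ))

lemma EllK_lt {a b : ℝ} (ha : 0 ≤ a) (hab : a < b) (hb : b < 1) : EllK a < EllK b := by
  have ha2 : a^2 < 1 := by nlinarith
  have hb2 : b^2 < 1 := by nlinarith
  have key : 0 < ∫ θ in (0:ℝ)..(π/2),
      (1 / Real.sqrt (1 - b^2 * Real.sin θ ^ 2) - 1 / Real.sqrt (1 - a^2 * Real.sin θ ^ 2)) := by
    apply intervalIntegral.intervalIntegral_pos_of_pos_on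
    · exact (((ellK_cont hb2).sub (ellK_cont ha2)).intervalIntegrable _ _)
    · intro θ hθ
      have hs : 0 < Real.sin θ := Real.sin_pos_of_pos_of_lt_pi hθ.1
        (lt_trans hθ.2 (by linarith [Real.pi_pos]))
      have h1 : 1 - b^2 * Real.sin θ ^ 2 < 1 - a^2 * Real.sin θ ^ 2 := by
        nlinarith [mul_pos (by nlinarith : (0:ℝ) < b^2 - a^2) (mul_pos hs hs)]
      have h2 : 0 < 1 - b^2 * Real.sin θ ^ 2 := ellK_fact hb2 θ
      have h3 : Real.sqrt (1 - b^2 * Real.sin θ ^ 2) < Real.sqrt (1 - a^2 * Real.sin θ ^ 2) :=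
        Real.sqrt_lt_sqrt h2.le h1
      have h4 : 0 < Real.sqrt (1 - b^2 * Real.sin θ ^ 2) := Real.sqrt_pos.2 h2
      have := one_div_lt_one_div_of_lt h4 h3
      linarith
    · positivity
  rw [intervalIntegral.integral_sub (((ellK_cont hb2).intervalIntegrable _ _))
    (((ellK_cont ha2).intervalIntegrable _ _))] at key
  unfold EllK
  linarith

lemma nome_mem {k : ℝ} (hk : k ∈ Set.Ioo (0:ℝ) 1) : nome k ∈ Set.Ioo (0:ℝ) 1 := by
  obtain ⟨h0, h1⟩ := hk
  have hk2 : k^2 < 1 := by nlinarith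
  have hK : 0 < EllK k := EllK_pos hk2
  have hs : (Real.sqrt (1 - k^2))^2 < 1 := by
    rw [Real.sq_sqrt (by nlinarith)]; nlinarith
  have hK' : 0 < EllK' k := EllK_pos hs
  refine ⟨Real.exp_pos _, ?_⟩
  rw [← Real.exp_zero]
  apply Real.exp_lt_exp.2
  have : 0 < π * EllK' k := by positivity
  rw [div_lt_iff₀ hK]
  nlinarith

lemma nome_strictMono : StrictMonoOn nome (Set.Ioo (0:ℝ) 1) := by
  intro k1 hk1 k2 hk2 h12
  have h1 : k1^2 < 1 := by nlinarith [hk1.1, hk1.2]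
  have h2 : k2^2 < 1 := by nlinarith [hk2.1, hk2.2]
  have hK1 : 0 < EllK k1 := EllK_pos h1
  have hK2 : 0 < EllK k2 := EllK_pos h2
  have hKlt : EllK k1 < EllK k2 := EllK_lt hk1.1.le h12 hk2.2
  -- complementary moduli
  have hc2 : Real.sqrt (1 - k2^2) < Real.sqrt (1 - k1^2) := by
    apply Real.sqrt_lt_sqrt (by nlinarith)
    nlinarith [hk1.1, hk2.1]
  have hc2pos : 0 < Real.sqrt (1 - k2^2) := Real.sqrt_pos.2 (by nlinarith)
  have hc1lt : Real.sqrt (1 - k1^2) < 1 := by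
    have h := Real.sqrt_lt_sqrt (by nlinarith [hk1.1] : (0:ℝ) ≤ 1 - k1^2)
      (by nlinarith [hk1.1] : 1 - k1^2 < 1)
    simpa using h
  have hK' : EllK' k2 < EllK' k1 := EllK_lt hc2pos.le hc2 hc1lt
  have hK'2pos : 0 < EllK' k2 := by
    apply EllK_pos
    rw [Real.sq_sqrt (by nlinarith)]; nlinarith [hk2.1]
  unfold nome
  apply Real.exp_lt_exp.2
  rw [div_lt_div_iff₀ hK1 hK2]
  have hm : EllK' k2 * EllK k1 < EllK' k1 * EllK k2 :=
    mul_lt_mul hK' hKlt.le hK1 (le_of_lt (lt_trans hK'2pos hK'))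
  nlinarith [mul_lt_mul_of_pos_left hm Real.pi_pos]


theorem stmt_1 (lam mu : ℝ) (h : Real.cos (lam * π) < Real.cos (mu * π)) :
    (∀ k ∈ Set.Ioo (0:ℝ) 1,
      0 < JTheta (lam * EllK k) k / JTheta (mu * EllK k) k) ∧
    StrictMonoOn (fun k => JTheta (lam * EllK k) k / JTheta (mu * EllK k) k)
      (Set.Ioo (0:ℝ) 1) := by
  have hx : |Real.cos (lam * π)| ≤ 1 := Real.abs_cos_le_one _
  have hy : |Real.cos (mu * π)| ≤ 1 := Real.abs_cos_le_one _
  have key : ∀ k ∈ Set.Ioo (0:ℝ) 1,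
      JTheta (lam * EllK k) k / JTheta (mu * EllK k) k
        = Real.exp (∑' j:ℕ, (Real.log (Aj (nome k) (Real.cos (lam * π)) j)
            - Real.log (Aj (nome k) (Real.cos (mu * π)) j))) := by
    intro k hk
    have hKpos : 0 < EllK k := EllK_pos (by nlinarith [hk.1, hk.2])
    have hqmem := nome_mem hk
    have hJ : ∀ l : ℝ, JTheta (l * EllK k) k
        = 1 + 2*∑' n:ℕ, (-1:ℝ)^(n+1) * (nome k)^((n+1)^2)
            * Real.cos (((n:ℝ)+1)*(l*π)) := by
      intro l
      unfold JTheta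
      congr 2
      apply tsum_congr
      intro n
      congr 2
      field_simp
    rw [hJ lam, hJ mu]
    exact theta_ratio hqmem.1 hqmem.2 hx hy (lam*π) (mu*π) rfl rfl
  constructor
  · intro k hk
    rw [key k hk]
    exact Real.exp_pos _
  · intro k1 hk1 k2 hk2 h12
    have e1 := key k1 hk1
    have e2 := key k2 hk2
    simp only
    rw [e1, e2]
    apply Real.exp_lt_exp.2
    have hn12 : nome k1 < nome k2 := nome_strictMono hk1 hk2 h12
    have hq1 := nome_mem hk1
    have hq2 := nome_mem hk2
    exact Dsum_lt hq1.1 hn12 hq2.2 h hx hy
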